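/- Let α ∈ [0,1/2), t ≥ 0 and x ∈ X. Then the function s ↦ e^{(2s)A}(Q^{2α}x) is Bochner integrable on [0,t] and ∫₀^t e^{(2s)A}(Q^{2α}x) ds = Qx − Q(e^{(2t)A}x). In other words, the covariance operator Q_t x := ∫₀^t e^{(2s)A}Q^{2α}x ds equals Q(Id − e^{(2t)A})x. -/

import Mathlib

/-!
Context: as before; `Q^{2α}` is the unique bounded operator `Q2α` with
`Q2α (e i) = (q i)^(2α) • e i`; for `α ∈ [0,1/2)`, `e^{tA}` is the unique family `S`
with `S 0 = Id` and `S t (e i) = exp(−(t/2)(q i)^{2α−1}) • e i` for `t > 0`.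

STATEMENT 9: for `t ≥ 0` and `x ∈ X`, the function `s ↦ e^{(2s)A}(Q^{2α}x)` is Bochner
integrable on `[0,t]` and `∫₀^t e^{(2s)A}(Q^{2α}x) ds = Qx − Q(e^{(2t)A}x)`; i.e. the
covariance operator `Q_t x = ∫₀^t e^{(2s)A}Q^{2α}x ds` equals `Q(Id − e^{(2t)A})x`.
-/

open scoped RealInnerProductSpace ENNReal
open MeasureTheory

noncomputable section

/-- coordinate of a diagonal operator -/
lemma aux_coord {X : Type*} [NormedAddCommGroup X] [InnerProductSpace ℝ X] [CompleteSpace X]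
    {ι : Type*} (e : HilbertBasis ι ℝ X) (T : X →L[ℝ] X) (E : ι → ℝ)
    (hT : ∀ i, T (e i) = E i • e i) (z : X) (j : ι) :
    ⟪e j, T z⟫ = E j * ⟪e j, z⟫ := by
  classical
  have h := (e.hasSum_repr z).mapL ((innerSL ℝ (e j)).comp T)
  have h2 : HasSum (fun i => if i = j then E j * e.repr z j else 0)
      (((innerSL ℝ (e j)).comp T) z) := by
    refine h.congr_fun fun i => ?_
    have hterm : ((innerSL ℝ (e j)).comp T) (e.repr z i • e i)
        = e.repr z i * (E i * ⟪e j, e i⟫) := by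
      rw [ContinuousLinearMap.comp_apply, T.map_smul, hT, innerSL_apply_apply,
        real_inner_smul_right, real_inner_smul_right]
    rw [hterm, orthonormal_iff_ite.mp e.orthonormal j i]
    by_cases hij : i = j
    · subst hij; simp [mul_comm]
    · simp [hij, Ne.symm hij]
  have h3 : HasSum (fun i => if i = j then E j * e.repr z j else 0)
      (E j * e.repr z j) := hasSum_ite_eq j _
  have := h2.unique h3
  simp only [ContinuousLinearMap.comp_apply, innerSL_apply_apply] at this
  rw [this, e.repr_apply_apply]

/-- norm comparison via coordinates -/
lemma aux_norm_le {X : Type*} [NormedAddCommGroup X] [InnerProductSpace ℝ X] [CompleteSpace X]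
    {ι : Type*} (e : HilbertBasis ι ℝ X) (u v : X) (M : ℝ) (hM : 0 ≤ M)
    (h : ∀ j, |⟪e j, u⟫| ≤ M * |⟪e j, v⟫|) : ‖u‖ ≤ M * ‖v‖ := by
  have hu : HasSum (fun i => ⟪e i, u⟫ ^ 2) (‖u‖ ^ 2) := by
    have := e.hasSum_inner_mul_inner u u
    rw [real_inner_self_eq_norm_sq] at this
    refine this.congr_fun fun i => ?_
    rw [real_inner_comm u (e i)]; ring
  have hv : HasSum (fun i => ⟪e i, v⟫ ^ 2) (‖v‖ ^ 2) := by
    have := e.hasSum_inner_mul_inner v v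
    rw [real_inner_self_eq_norm_sq] at this
    refine this.congr_fun fun i => ?_
    rw [real_inner_comm v (e i)]; ring
  have hsq : ‖u‖ ^ 2 ≤ M ^ 2 * ‖v‖ ^ 2 := by
    refine hasSum_le (fun i => ?_) hu (hv.mul_left (M ^ 2))
    have hi := h i
    nlinarith [abs_nonneg (⟪e i, u⟫), sq_abs (⟪e i, u⟫), sq_abs (⟪e i, v⟫),
      abs_nonneg (⟪e i, v⟫)]
  nlinarith [norm_nonneg u, norm_nonneg v, mul_nonneg hM (norm_nonneg v)]

lemma aux_mul_exp_le (u : ℝ) (hu : 0 ≤ u) : u * Real.exp (-u) ≤ Real.exp (-1) := by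
  have h := Real.add_one_le_exp (u - 1)
  have h2 : Real.exp (u - 1) = Real.exp u * Real.exp (-1) := by
    rw [← Real.exp_add]; ring_nf
  have h3 : Real.exp (-u) * Real.exp u = 1 := by rw [← Real.exp_add]; simp
  nlinarith [Real.exp_pos (-u), Real.exp_pos u, Real.exp_pos (-1)]

lemma aux_exp_lip (m a b : ℝ) (ha : m ≤ a) (hb : m ≤ b) :
    |Real.exp (-a) - Real.exp (-b)| ≤ Real.exp (-m) * |a - b| := by
  wlog hab : a ≤ b generalizing a b
  · rw [abs_sub_comm, abs_sub_comm a b]; exact this b a hb ha (le_of_not_ge hab)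
  have h1 := Real.add_one_le_exp (-(b - a))
  have e1 : Real.exp (-b) = Real.exp (-a) * Real.exp (-(b - a)) := by
    rw [← Real.exp_add]; ring_nf
  have h2 : Real.exp (-a) ≤ Real.exp (-m) := Real.exp_le_exp.2 (by linarith)
  have hd : 0 ≤ Real.exp (-a) - Real.exp (-b) := by
    have := Real.exp_le_exp.2 (neg_le_neg hab); linarith
  rw [abs_of_nonneg hd, abs_of_nonpos (by linarith), neg_sub]
  nlinarith [Real.exp_pos (-a)]


theorem stmt_9
    {X : Type*} [NormedAddCommGroup X] [InnerProductSpace ℝ X] [CompleteSpace X]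
    [TopologicalSpace.SeparableSpace X]
    {ι : Type*} (e : HilbertBasis ι ℝ X) (q : ι → ℝ) (Q : X →L[ℝ] X)
    (hq : ∀ i, 0 < q i)
    (hdiag : ∀ i, Q (e i) = q i • e i)
    (hsa : IsSelfAdjoint Q)
    (hpos : ∀ x : X, x ≠ 0 → 0 < ⟪Q x, x⟫)
    (hcomp : IsCompactOperator Q)
    (htrace : Summable fun i => ⟪Q (e i), e i⟫)
    {α : ℝ} (hα : α ∈ Set.Ico (0 : ℝ) (1/2))
    (Q2α : X →L[ℝ] X) (hQ2α : ∀ i, Q2α (e i) = (q i) ^ (2*α) • e i)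
    (S : ℝ → X →L[ℝ] X)
    (hS0 : S 0 = ContinuousLinearMap.id ℝ X)
    (hSdiag : ∀ t > (0 : ℝ), ∀ i,
      S t (e i) = Real.exp (-(t/2) * (q i) ^ (2*α - 1)) • e i)
    {t : ℝ} (ht : 0 ≤ t) (x : X) :
    IntegrableOn (fun s => S (2*s) (Q2α x)) (Set.Icc 0 t) volume ∧
    ∫ s in Set.Icc (0 : ℝ) t, S (2*s) (Q2α x) = Q x - Q (S (2*t) x) := by
  set y := Q2α x with hy
  -- coordinates of S (2*s) for s > 0
  have hScoord : ∀ s : ℝ, 0 < s → ∀ z : X, ∀ j,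
      ⟪e j, S (2*s) z⟫ = Real.exp (-(s * q j ^ (2*α - 1))) * ⟪e j, z⟫ := by
    intro s hs z j
    have h := aux_coord e (S (2*s)) (fun i => Real.exp (-(2*s/2) * q i ^ (2*α - 1)))
      (hSdiag (2*s) (by linarith)) z j
    rw [h]
    congr 2
    ring
  -- contraction bound
  have hcontr : ∀ s : ℝ, 0 < s → ‖S (2*s) y‖ ≤ 1 * ‖y‖ := by
    intro s hs
    refine aux_norm_le e _ y 1 zero_le_one fun j => ?_
    rw [hScoord s hs y j, abs_mul, Real.abs_exp, one_mul]
    have hLj : 0 < q j ^ (2*α - 1) := Real.rpow_pos_of_pos (hq j) _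
    have hexp : Real.exp (-(s * q j ^ (2*α - 1))) ≤ 1 := by
      have h := Real.exp_le_exp.2 (show -(s * q j ^ (2*α - 1)) ≤ 0 by nlinarith)
      simpa using h
    nlinarith [abs_nonneg (⟪e j, y⟫)]
  -- local Lipschitz bound
  have hlip : ∀ m : ℝ, 0 < m → ∀ s s' : ℝ, m ≤ s → m ≤ s' →
      ‖S (2*s) y - S (2*s') y‖ ≤ (Real.exp (-1) / m * |s - s'|) * ‖y‖ := by
    intro m hm s s' hs hs'
    refine aux_norm_le e _ y _ (by positivity) fun j => ?_
    have hs0 : 0 < s := lt_of_lt_of_le hm hs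
    have hs'0 : 0 < s' := lt_of_lt_of_le hm hs'
    set Lj := q j ^ (2*α - 1) with hLjdef
    have hLj : 0 < Lj := Real.rpow_pos_of_pos (hq j) _
    rw [inner_sub_right, hScoord s hs0 y j, hScoord s' hs'0 y j, ← sub_mul, abs_mul]
    have hmain : |Real.exp (-(s * Lj)) - Real.exp (-(s' * Lj))| ≤ Real.exp (-1) / m * |s - s'| := by
      have h1 := aux_exp_lip (m * Lj) (s * Lj) (s' * Lj)
        (mul_le_mul_of_nonneg_right hs hLj.le) (mul_le_mul_of_nonneg_right hs' hLj.le)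
      have h2 : Real.exp (-(m * Lj)) * Lj ≤ Real.exp (-1) / m := by
        rw [le_div_iff₀ hm]
        nlinarith [aux_mul_exp_le (m * Lj) (by positivity)]
      calc |Real.exp (-(s * Lj)) - Real.exp (-(s' * Lj))|
          ≤ Real.exp (-(m * Lj)) * |s * Lj - s' * Lj| := h1
        _ = (Real.exp (-(m * Lj)) * Lj) * |s - s'| := by
            rw [show s * Lj - s' * Lj = (s - s') * Lj by ring, abs_mul, abs_of_pos hLj]; ring
        _ ≤ Real.exp (-1) / m * |s - s'| := mul_le_mul_of_nonneg_right h2 (abs_nonneg _)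
    exact mul_le_mul_of_nonneg_right hmain (abs_nonneg _)
  -- continuity on (0,∞)
  have hconts : ∀ s₀ : ℝ, 0 < s₀ → ContinuousAt (fun s => S (2*s) y) s₀ := by
    intro s₀ hs₀
    have hm : 0 < s₀ / 2 := by linarith
    have hlipOn : LipschitzOnWith (Real.toNNReal (Real.exp (-1) / (s₀/2) * ‖y‖))
        (fun s => S (2*s) y) (Set.Ici (s₀/2)) := by
      refine LipschitzOnWith.of_dist_le_mul fun a ha b hb => ?_
      rw [dist_eq_norm, Real.dist_eq]
      calc ‖S (2*a) y - S (2*b) y‖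
          ≤ (Real.exp (-1) / (s₀/2) * |a - b|) * ‖y‖ := hlip _ hm a b ha hb
        _ = (Real.exp (-1) / (s₀/2) * ‖y‖) * |a - b| := by ring
        _ ≤ (Real.toNNReal (Real.exp (-1) / (s₀/2) * ‖y‖) : ℝ) * |a - b| :=
            mul_le_mul_of_nonneg_right (Real.le_coe_toNNReal _) (abs_nonneg _)
    exact hlipOn.continuousOn.continuousAt (Ici_mem_nhds (by linarith))
  -- integrability
  have hcontOn : ContinuousOn (fun s => S (2*s) y) (Set.Ioc 0 t) :=
    fun s hs => (hconts s hs.1).continuousWithinAt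
  have hintIoc : IntegrableOn (fun s => S (2*s) y) (Set.Ioc 0 t) volume := by
    have hb : ∀ᵐ s ∂(volume.restrict (Set.Ioc (0:ℝ) t)), ‖S (2*s) y‖ ≤ ‖y‖ := by
      refine (ae_restrict_iff' measurableSet_Ioc).2 (Filter.Eventually.of_forall fun s hs => ?_)
      simpa using hcontr s hs.1
    exact Integrable.mono' (integrableOn_const measure_Ioc_lt_top.ne)
      (hcontOn.aestronglyMeasurable measurableSet_Ioc) hb
  have hintIcc : IntegrableOn (fun s => S (2*s) y) (Set.Icc 0 t) volume :=
    (integrableOn_Icc_iff_integrableOn_Ioc (by exact enorm_ne_top)).2 hintIoc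
  refine ⟨hintIcc, ?_⟩
  -- coordinatewise identity
  have hext : ∀ j, ⟪e j, ∫ s in Set.Icc (0:ℝ) t, S (2*s) y⟫ = ⟪e j, Q x - Q (S (2*t) x)⟫ := by
    intro j
    set Lj := q j ^ (2*α - 1) with hLjdef
    have hLj : 0 < Lj := Real.rpow_pos_of_pos (hq j) _
    set c := ⟪e j, x⟫ with hc
    have hyc : ⟪e j, y⟫ = q j ^ (2*α) * c := aux_coord e Q2α (fun i => q i ^ (2*α)) hQ2α x j
    -- left side
    have hL1 : ⟪e j, ∫ s in Set.Icc (0:ℝ) t, S (2*s) y⟫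
        = ∫ s in Set.Icc (0:ℝ) t, ⟪e j, S (2*s) y⟫ := (integral_inner hintIcc (e j)).symm
    have hL2 : ∫ s in Set.Icc (0:ℝ) t, ⟪e j, S (2*s) y⟫
        = ∫ s in Set.Ioc (0:ℝ) t, ⟪e j, S (2*s) y⟫ := integral_Icc_eq_integral_Ioc
    have hL3 : ∫ s in Set.Ioc (0:ℝ) t, ⟪e j, S (2*s) y⟫
        = ∫ s in Set.Ioc (0:ℝ) t, Real.exp (-(s * Lj)) * (q j ^ (2*α) * c) := by
      refine setIntegral_congr_fun measurableSet_Ioc fun s hs => ?_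
      rw [hScoord s hs.1 y j, hyc]
    have hL4 : ∫ s in Set.Ioc (0:ℝ) t, Real.exp (-(s * Lj)) * (q j ^ (2*α) * c)
        = (∫ s in (0:ℝ)..t, Real.exp (-(s * Lj))) * (q j ^ (2*α) * c) := by
      rw [← intervalIntegral.integral_of_le ht, intervalIntegral.integral_mul_const]
    have hval : ∫ s in (0:ℝ)..t, Real.exp (-(s * Lj)) = (1 - Real.exp (-(t * Lj))) / Lj := by
      have hderiv : ∀ s ∈ Set.uIcc (0:ℝ) t,
          HasDerivAt (fun u => -Lj⁻¹ * Real.exp (-(u * Lj))) (Real.exp (-(s * Lj))) s := by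
        intro s _
        have h1 : HasDerivAt (fun u : ℝ => -(u * Lj)) (-Lj) s := by
          exact (hasDerivAt_mul_const Lj).neg
        have h3 := h1.exp.const_mul (-Lj⁻¹)
        refine h3.congr_deriv ?_
        rw [mul_comm (Real.exp _) (-Lj), ← mul_assoc, neg_mul_neg, inv_mul_cancel₀ hLj.ne', one_mul]
      have hci : IntervalIntegrable (fun s => Real.exp (-(s * Lj))) volume 0 t :=
        (by fun_prop : Continuous fun s => Real.exp (-(s * Lj))).intervalIntegrable 0 t
      rw [intervalIntegral.integral_eq_sub_of_hasDerivAt hderiv hci]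
      simp only [zero_mul, neg_zero, Real.exp_zero]
      field_simp
      ring
    -- right side coordinates
    have hQc : ∀ z, ⟪e j, Q z⟫ = q j * ⟪e j, z⟫ := fun z => aux_coord e Q q hdiag z j
    have hS2t : ⟪e j, S (2*t) x⟫ = Real.exp (-(t * Lj)) * c := by
      rcases eq_or_lt_of_le ht with h0 | hpos'
      · rw [← h0]; simp [hS0, hc]
      · exact hScoord t hpos' x j
    have hql : q j ^ (2*α) = q j * Lj := by
      have h := Real.rpow_add (hq j) 1 (2*α - 1)
      rw [Real.rpow_one] at h
      rw [hLjdef, ← h]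
      congr 1
      ring
    rw [hL1, hL2, hL3, hL4, hval, inner_sub_right, hQc, hQc, hS2t, hql, ← hc]
    field_simp
  -- conclude
  have hrepr : e.repr (∫ s in Set.Icc (0:ℝ) t, S (2*s) y) = e.repr (Q x - Q (S (2*t) x)) := by
    ext j
    rw [e.repr_apply_apply, e.repr_apply_apply]
    exact hext j
  exact e.repr.injective hrepr
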